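/- Contraction preserves the join-tree property: let T be a join tree of a hypergraph, and A_1, …, A_s a path in T with s ≥ 3. If for some j we have A_j ∩ A_{j+1} ⊆ A_1 ∩ A_s, then the graph obtained by removing edge (A_j, A_{j+1}) and adding edge (A_1, A_s) is again a join tree (the running intersection property still holds). -/

import Mathlib

open SimpleGraph

/-- A walk along consecutive vertices `A a, A (a+1), …, A (a+n)` with explicit
support and edge lists. -/
private lemma chain_exists {ι : Type*} (G : SimpleGraph ι) (A : ℕ → ι) :
    ∀ (n a : ℕ), (∀ k, a ≤ k → k < a + n → G.Adj (A k) (A (k + 1))) →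
      ∃ w : G.Walk (A a) (A (a + n)),
        w.support = (List.range (n + 1)).map (fun i => A (a + i)) ∧
        w.edges = (List.range n).map (fun i => s(A (a + i), A (a + i + 1)))
  | 0, a, _ => ⟨SimpleGraph.Walk.nil, by rw [List.range_succ]; simp, by simp⟩
  | n + 1, a, h => by
    obtain ⟨w, hsup, hedg⟩ := chain_exists G A n (a + 1)
      (fun k hk hk' => h k (by omega) (by omega))
    refine ⟨SimpleGraph.Walk.cons (h a le_rfl (by omega))
      (w.copy rfl (congrArg A (by omega))), ?_, ?_⟩
    · rw [SimpleGraph.Walk.support_cons, SimpleGraph.Walk.support_copy, hsup,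
        List.range_succ_eq_map (n := n + 1), List.map_cons, List.map_map]
      refine congrArg₂ _ (by simp) (List.map_congr_left fun i _ => ?_)
      simp only [Function.comp_apply]
      rw [show a + 1 + i = a + i.succ from by omega]
    · rw [SimpleGraph.Walk.edges_cons, SimpleGraph.Walk.edges_copy, hedg,
        List.range_succ_eq_map (n := n), List.map_cons, List.map_map]
      refine congrArg₂ _ (by simp) (List.map_congr_left fun i _ => ?_)
      simp only [Function.comp_apply]
      rw [show a + 1 + i = a + i.succ from by omega]

/-- In an acyclic graph, the support of a path between two vertices is contained
in the support of any walk between them. -/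
private lemma path_support_subset {ι : Type*} [DecidableEq ι] {G : SimpleGraph ι} (hG : G.IsAcyclic)
    {a b : ι} (Q w : G.Walk a b) (hQ : Q.IsPath) : ∀ x ∈ Q.support, x ∈ w.support := by
  have h := hG.path_unique ⟨w.bypass, w.bypass_isPath⟩ ⟨Q, hQ⟩
  have h' : w.bypass = Q := congrArg Subtype.val h
  intro x hx
  exact w.support_bypass_subset (h' ▸ hx)

/-- In an acyclic graph, the edges of a path between two vertices are contained
in the edges of any walk between them. -/
private lemma path_edges_subset {ι : Type*} [DecidableEq ι] {G : SimpleGraph ι} (hG : G.IsAcyclic)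
    {a b : ι} (Q w : G.Walk a b) (hQ : Q.IsPath) : ∀ g ∈ Q.edges, g ∈ w.edges := by
  have h := hG.path_unique ⟨w.bypass, w.bypass_isPath⟩ ⟨Q, hQ⟩
  have h' : w.bypass = Q := congrArg Subtype.val h
  intro g hg
  exact w.edges_bypass_subset (h' ▸ hg)

/-- contraction preserves the join-tree property. Given a join tree `T`
(for labels `label`), a path `A 0, …, A (s-1)` in `T` with `s ≥ 3`, and an index `j`
with `label (A j) ∩ label (A (j+1)) ⊆ label (A 0) ∩ label (A (s-1))`, the graph
obtained by deleting the edge `(A j, A (j+1))` and adding the edge `(A 0, A (s-1))`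
is again a tree satisfying the running intersection property. -/
theorem stmt_7 {V ι : Type*} (label : ι → Set V) (T : SimpleGraph ι)
    (hT : T.IsTree)
    (hjoin : ∀ (v : V) (i j : ι), v ∈ label i → v ∈ label j →
      ∃ p : T.Walk i j, ∀ x ∈ p.support, v ∈ label x)
    (s : ℕ) (hs : 3 ≤ s) (A : ℕ → ι)
    (hinj : ∀ i j, i < s → j < s → A i = A j → i = j)
    (hadj : ∀ i, i + 1 < s → T.Adj (A i) (A (i + 1)))
    (j : ℕ) (hj : j + 1 < s)
    (hsub : label (A j) ∩ label (A (j + 1)) ⊆ label (A 0) ∩ label (A (s - 1))) :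
    ∀ T' : SimpleGraph ι,
      T' = (T.deleteEdges {s(A j, A (j + 1))}) ⊔
             SimpleGraph.fromEdgeSet {s(A 0, A (s - 1))} →
      T'.IsTree ∧ ∀ (v : V) (i i' : ι), v ∈ label i → v ∈ label i' →
        ∃ p : T'.Walk i i', ∀ x ∈ p.support, v ∈ label x := by
  classical
  intro T' hT'
  subst hT'
  set T' := (T.deleteEdges {s(A j, A (j + 1))}) ⊔
      SimpleGraph.fromEdgeSet {s(A 0, A (s - 1))} with hT'def
  -- basic distinctness facts
  have h01 : A 0 ≠ A (s - 1) := fun h => by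
    have := hinj 0 (s - 1) (by omega) (by omega) h; omega
  -- any path edge with index ≠ j differs from the deleted edge
  have hne_e : ∀ k, k + 1 < s → k ≠ j → s(A k, A (k + 1)) ≠ s(A j, A (j + 1)) := by
    intro k hk1 hkj hEq
    rw [Sym2.eq_iff] at hEq
    rcases hEq with ⟨h1, _⟩ | ⟨h1, h2⟩
    · exact hkj (hinj k j (by omega) (by omega) h1)
    · have := hinj k (j + 1) (by omega) (by omega) h1
      have := hinj (k + 1) j (by omega) (by omega) h2
      omega
  -- adjacency in T'
  have hT'adj : ∀ x y, T.Adj x y → s(x, y) ≠ s(A j, A (j + 1)) → T'.Adj x y := by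
    intro x y hxy hne
    exact Or.inl (SimpleGraph.deleteEdges_adj.mpr ⟨hxy, by simpa using hne⟩)
  have hT'f : T'.Adj (A 0) (A (s - 1)) :=
    Or.inr ⟨rfl, h01⟩
  have hadj' : ∀ k, k + 1 < s → k ≠ j → T'.Adj (A k) (A (k + 1)) :=
    fun k h1 h2 => hT'adj _ _ (hadj k h1) (hne_e k h1 h2)
  -- the explicit path from A 0 to A (s-1) in T
  obtain ⟨P0, hPsup, hPedg⟩ := chain_exists T A (s - 1) 0 (fun k _ hk' => hadj k (by omega))
  set P : T.Walk (A 0) (A (s - 1)) := P0.copy rfl (congrArg A (by omega)) with hPdef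
  have hPpath : P.IsPath := by
    rw [hPdef, SimpleGraph.Walk.isPath_copy, SimpleGraph.Walk.isPath_def, hPsup]
    refine List.Nodup.map_on ?_ List.nodup_range
    intro x hx y hy hxy
    rw [List.mem_range] at hx hy
    have := hinj (0 + x) (0 + y) (by omega) (by omega) hxy
    omega
  have heP : s(A j, A (j + 1)) ∈ P.edges := by
    rw [hPdef, SimpleGraph.Walk.edges_copy, hPedg]
    refine List.mem_map.mpr ⟨j, List.mem_range.mpr (by omega), ?_⟩
    rw [show 0 + j = j from by omega]
  -- A 0 and A (s-1) are disconnected after deleting the edge (A j, A (j+1))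
  have Key : ¬ (T.deleteEdges {s(A j, A (j + 1))}).Reachable (A 0) (A (s - 1)) := by
    rintro ⟨w⟩
    have hsub' : ∀ g ∈ w.edges, g ∈ T.edgeSet := fun g hg =>
      (SimpleGraph.edgeSet_mono (SimpleGraph.deleteEdges_le _)) (w.edges_subset_edgeSet hg)
    have hmem : s(A j, A (j + 1)) ∈ (w.transfer T hsub').edges :=
      path_edges_subset hT.IsAcyclic P (w.transfer T hsub') hPpath _ heP
    rw [SimpleGraph.Walk.edges_transfer] at hmem
    have := w.edges_subset_edgeSet hmem
    rw [SimpleGraph.edgeSet_deleteEdges] at this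
    exact this.2 rfl
  -- acyclicity of T'
  have hacyc : T'.IsAcyclic := by
    intro u c hc
    by_cases hf : s(A 0, A (s - 1)) ∈ c.edges
    · have hnb : ¬ T'.IsBridge s(A 0, A (s - 1)) := by
        rw [SimpleGraph.isBridge_iff_adj_and_forall_cycle_notMem]
        push_neg
        exact ⟨u, c, hc, hf⟩
        exact hT'f
      rw [SimpleGraph.isBridge_iff] at hnb
      push_neg at hnb
      have hreach := hnb
      refine Key (hreach.mono ?_)
      intro x y hxy
      rcases hxy with ⟨hxy1, hxy2⟩
      rcases hxy1 with h1 | h2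
      · exact h1
      · exact absurd h2 hxy2
    · have hce : ∀ g ∈ c.edges, g ∈ T.edgeSet := by
        intro g hg
        have hg' := c.edges_subset_edgeSet hg
        rw [hT'def, SimpleGraph.edgeSet_sup] at hg'
        rcases hg' with h1 | h2
        · exact (SimpleGraph.edgeSet_mono (SimpleGraph.deleteEdges_le _)) h1
        · rw [SimpleGraph.edgeSet_fromEdgeSet] at h2
          exact absurd (h2.1 ▸ hg) hf
      exact hT.IsAcyclic (c.transfer T hce) (hc.transfer hce)
  -- reachability of A j and A (j+1) in T' via the detour
  have RJ : T'.Reachable (A j) (A (j + 1)) := by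
    obtain ⟨w1, _, _⟩ := chain_exists T' A j 0 (fun k hk hk' => hadj' k (by omega) (by omega))
    obtain ⟨w2, _, _⟩ := chain_exists T' A (s - 1 - (j + 1)) (j + 1)
      (fun k hk hk' => hadj' k (by omega) (by omega))
    have r1 : T'.Reachable (A j) (A 0) := ⟨(w1.copy rfl (congrArg A (by omega))).reverse⟩
    have r2 : T'.Reachable (A (s - 1)) (A (j + 1)) :=
      ⟨(w2.copy rfl (congrArg A (by omega))).reverse⟩
    exact r1.trans (hT'f.reachable.trans r2)
  -- connectivity of T'
  have hstep : ∀ x y, T.Adj x y → T'.Reachable x y := by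
    intro x y hxy
    by_cases hne : s(x, y) = s(A j, A (j + 1))
    · rw [Sym2.eq_iff] at hne
      rcases hne with ⟨hx, hy⟩ | ⟨hx, hy⟩ <;> subst hx <;> subst hy
      · exact RJ
      · exact RJ.symm
    · exact (hT'adj x y hxy hne).reachable
  have hconn : T'.Connected := by
    rw [SimpleGraph.connected_iff]
    refine ⟨fun x y => ?_, hT.isConnected.nonempty⟩
    obtain ⟨w⟩ := hT.isConnected.preconnected x y
    induction w with
    | nil => exact SimpleGraph.Reachable.refl _
    | cons h p ih => exact (hstep _ _ h).trans ih
  refine ⟨⟨hconn, hacyc⟩, ?_⟩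
  -- the join property
  intro v i i' hvi hvi'
  -- if v belongs to both endpoints of the deleted edge, it belongs to every A k
  have hall : v ∈ label (A j) → v ∈ label (A (j + 1)) → ∀ k, k < s → v ∈ label (A k) := by
    intro hvj hvj1 k hk
    have hv0 : v ∈ label (A 0) := (hsub ⟨hvj, hvj1⟩).1
    have hvs : v ∈ label (A (s - 1)) := (hsub ⟨hvj, hvj1⟩).2
    rcases le_or_gt k j with hkj | hkj
    · obtain ⟨w, hw⟩ := hjoin v (A 0) (A j) hv0 hvj
      obtain ⟨Q0, hQsup, _⟩ := chain_exists T A j 0 (fun m _ hm' => hadj m (by omega))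
      set Q : T.Walk (A 0) (A j) := Q0.copy rfl (congrArg A (by omega)) with hQdef
      have hQpath : Q.IsPath := by
        rw [hQdef, SimpleGraph.Walk.isPath_copy, SimpleGraph.Walk.isPath_def, hQsup]
        refine List.Nodup.map_on ?_ List.nodup_range
        intro x hx y hy hxy
        rw [List.mem_range] at hx hy
        have := hinj (0 + x) (0 + y) (by omega) (by omega) hxy
        omega
      have hmem : A k ∈ Q.support := by
        rw [hQdef, SimpleGraph.Walk.support_copy, hQsup]
        exact List.mem_map.mpr ⟨k, List.mem_range.mpr (by omega), congrArg A (by omega)⟩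
      exact hw _ (path_support_subset hT.IsAcyclic Q w hQpath _ hmem)
    · obtain ⟨w, hw⟩ := hjoin v (A (j + 1)) (A (s - 1)) hvj1 hvs
      obtain ⟨Q0, hQsup, _⟩ := chain_exists T A (s - 1 - (j + 1)) (j + 1)
        (fun m hm hm' => hadj m (by omega))
      set Q : T.Walk (A (j + 1)) (A (s - 1)) := Q0.copy rfl (congrArg A (by omega)) with hQdef
      have hQpath : Q.IsPath := by
        rw [hQdef, SimpleGraph.Walk.isPath_copy, SimpleGraph.Walk.isPath_def, hQsup]
        refine List.Nodup.map_on ?_ List.nodup_range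
        intro x hx y hy hxy
        rw [List.mem_range] at hx hy
        have := hinj (j + 1 + x) (j + 1 + y) (by omega) (by omega) hxy
        omega
      have hmem : A k ∈ Q.support := by
        rw [hQdef, SimpleGraph.Walk.support_copy, hQsup]
        exact List.mem_map.mpr ⟨k - (j + 1), List.mem_range.mpr (by omega),
          congrArg A (by omega)⟩
      exact hw _ (path_support_subset hT.IsAcyclic Q w hQpath _ hmem)
  -- the detour walk in T' between A j and A (j+1), supported on label-sets containing v
  have hdetour : v ∈ label (A j) → v ∈ label (A (j + 1)) →
      ∃ D : T'.Walk (A j) (A (j + 1)), ∀ x ∈ D.support, v ∈ label x := by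
    intro hvj hvj1
    obtain ⟨w1, hw1s, _⟩ := chain_exists T' A j 0 (fun k hk hk' => hadj' k (by omega) (by omega))
    obtain ⟨w2, hw2s, _⟩ := chain_exists T' A (s - 1 - (j + 1)) (j + 1)
      (fun k hk hk' => hadj' k (by omega) (by omega))
    refine ⟨((w1.copy rfl (congrArg A (by omega))).reverse).append
      (SimpleGraph.Walk.cons hT'f ((w2.copy rfl (congrArg A (by omega))).reverse)), ?_⟩
    intro x hx
    rw [SimpleGraph.Walk.mem_support_append_iff] at hx
    rcases hx with hx | hx
    · rw [SimpleGraph.Walk.support_reverse, List.mem_reverse,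
        SimpleGraph.Walk.support_copy, hw1s] at hx
      obtain ⟨m, hm, rfl⟩ := List.mem_map.mp hx
      rw [List.mem_range] at hm
      exact hall hvj hvj1 (0 + m) (by omega)
    · rw [SimpleGraph.Walk.support_cons] at hx
      rcases List.mem_cons.mp hx with rfl | hx
      · exact hall hvj hvj1 0 (by omega)
      · rw [SimpleGraph.Walk.support_reverse, List.mem_reverse,
          SimpleGraph.Walk.support_copy, hw2s] at hx
        obtain ⟨m, hm, rfl⟩ := List.mem_map.mp hx
        rw [List.mem_range] at hm
        exact hall hvj hvj1 (j + 1 + m) (by omega)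
  -- lift walks from T to T'
  have lift : ∀ (x y : ι) (w : T.Walk x y), (∀ z ∈ w.support, v ∈ label z) →
      ∃ q : T'.Walk x y, ∀ z ∈ q.support, v ∈ label z := by
    intro x y w
    induction w with
    | nil => exact fun h => ⟨SimpleGraph.Walk.nil, h⟩
    | @cons a b c hab p ih =>
      intro h
      obtain ⟨q, hq⟩ := ih (fun z hz => h z (by simp [hz]))
      have hva : v ∈ label a := h a (by simp)
      have hvb : v ∈ label b := h b (by simp)
      by_cases hcase : s(a, b) = s(A j, A (j + 1))
      · rw [Sym2.eq_iff] at hcase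
        rcases hcase with ⟨ha, hb⟩ | ⟨ha, hb⟩ <;> subst ha <;> subst hb
        · obtain ⟨D, hD⟩ := hdetour hva hvb
          refine ⟨D.append q, ?_⟩
          intro z hz
          rcases (SimpleGraph.Walk.mem_support_append_iff _ _).mp hz with hz | hz
          · exact hD z hz
          · exact hq z hz
        · obtain ⟨D, hD⟩ := hdetour hvb hva
          refine ⟨D.reverse.append q, ?_⟩
          intro z hz
          rcases (SimpleGraph.Walk.mem_support_append_iff _ _).mp hz with hz | hz
          · exact hD z (by rwa [SimpleGraph.Walk.support_reverse, List.mem_reverse] at hz)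
          · exact hq z hz
      · refine ⟨SimpleGraph.Walk.cons (hT'adj a b hab hcase) q, ?_⟩
        intro z hz
        rw [SimpleGraph.Walk.support_cons] at hz
        rcases List.mem_cons.mp hz with rfl | hz
        · exact hva
        · exact hq z hz
  obtain ⟨p, hp⟩ := hjoin v i i' hvi hvi'
  exact lift i i' p hp
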